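/- Let n be a positive integer, K > 0 a real number, and let A and B be n×n complex Hermitian matrices such that for every t ∈ [0,1] the matrix A + tB is positive definite and (A+tB) − K⁻¹·I is positive semidefinite (i.e. all eigenvalues of A+tB are at least 1/K). Then | log det(A+B) − log det(A) − tr(A⁻¹B) | ≤ (K²/2) · Σ_{i,j} |B_{ij}|². -/

import Mathlib

open scoped ComplexOrder
open Set Matrix Polynomial

attribute [local instance] Matrix.linftyOpNormedRing Matrix.linftyOpNormedAlgebra

section Helpers
variable {n : ℕ}

lemma taylor_aux_one {f g h : ℝ → ℝ} {M : ℝ}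
    (hf : ∀ t ∈ Icc (0:ℝ) 1, HasDerivAt f (g t) t)
    (hg : ∀ t ∈ Icc (0:ℝ) 1, HasDerivAt g (h t) t)
    (hM : ∀ t ∈ Icc (0:ℝ) 1, h t ≤ M) : f 1 - f 0 - g 0 ≤ M / 2 := by
  set u : ℝ → ℝ := fun t => f 0 + g 0 * t + M / 2 * t ^ 2 - f t with hu
  have hu' : ∀ t ∈ Icc (0:ℝ) 1, HasDerivAt u (g 0 + M * t - g t) t := by
    intro t ht
    have h1 : HasDerivAt (fun t : ℝ => f 0 + g 0 * t + M / 2 * t ^ 2) (g 0 + M * t) t := by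
      have := (((hasDerivAt_id t).const_mul (g 0)).const_add (f 0)).add
        (((hasDerivAt_pow 2 t)).const_mul (M / 2))
      refine this.congr_deriv ?_
      ring
    exact h1.sub (hf t ht)
  set v : ℝ → ℝ := fun t => g 0 + M * t - g t with hv
  have hv' : ∀ t ∈ Icc (0:ℝ) 1, HasDerivAt v (M - h t) t := by
    intro t ht
    have := (((hasDerivAt_id t).const_mul M).const_add (g 0)).sub (hg t ht)
    exact this.congr_deriv (by ring)
  -- v is monotone on Icc
  have hvmono : MonotoneOn v (Icc (0:ℝ) 1) := by
    apply monotoneOn_of_deriv_nonneg (convex_Icc 0 1)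
    · exact fun t ht => (hv' t ht).continuousAt.continuousWithinAt
    · intro t ht
      rw [interior_Icc] at ht
      exact ((hv' t (Ioo_subset_Icc_self ht)).differentiableAt).differentiableWithinAt
    · intro t ht
      rw [interior_Icc] at ht
      rw [(hv' t (Ioo_subset_Icc_self ht)).deriv]
      have := hM t (Ioo_subset_Icc_self ht)
      linarith
  have hv0 : v 0 = 0 := by simp [hv]
  have humono : MonotoneOn u (Icc (0:ℝ) 1) := by
    apply monotoneOn_of_deriv_nonneg (convex_Icc 0 1)
    · exact fun t ht => (hu' t ht).continuousAt.continuousWithinAt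
    · intro t ht
      rw [interior_Icc] at ht
      exact ((hu' t (Ioo_subset_Icc_self ht)).differentiableAt).differentiableWithinAt
    · intro t ht
      rw [interior_Icc] at ht
      rw [(hu' t (Ioo_subset_Icc_self ht)).deriv]
      have h0 : v 0 ≤ v t := hvmono (by norm_num) (Ioo_subset_Icc_self ht) ht.1.le
      rw [hv0] at h0
      exact h0
  have := humono (show (0:ℝ) ∈ Icc (0:ℝ) 1 by norm_num) (show (1:ℝ) ∈ Icc (0:ℝ) 1 by norm_num) zero_le_one
  simp only [hu] at this
  nlinarith [this]

lemma taylor_aux {f g h : ℝ → ℝ} {M : ℝ}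
    (hf : ∀ t ∈ Icc (0:ℝ) 1, HasDerivAt f (g t) t)
    (hg : ∀ t ∈ Icc (0:ℝ) 1, HasDerivAt g (h t) t)
    (hM : ∀ t ∈ Icc (0:ℝ) 1, |h t| ≤ M) : |f 1 - f 0 - g 0| ≤ M / 2 := by
  rw [abs_le]
  constructor
  · have := taylor_aux_one (f := fun t => -f t) (g := fun t => -g t) (h := fun t => -h t)
      (M := M) (fun t ht => (hf t ht).neg) (fun t ht => (hg t ht).neg)
      (fun t ht => by have := (abs_le.1 (hM t ht)).1; linarith)
    linarith
  · exact taylor_aux_one hf hg fun t ht => le_of_abs_le (hM t ht)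


lemma diag_nonneg_of_psd {P : Matrix (Fin n) (Fin n) ℂ} (hP : P.PosSemidef) (i : Fin n) :
    0 ≤ P i i := by
  exact hP.diag_nonneg

lemma trace_nonneg_of_psd {P : Matrix (Fin n) (Fin n) ℂ} (hP : P.PosSemidef) :
    0 ≤ P.trace := by
  rw [Matrix.trace]
  exact Finset.sum_nonneg fun i _ => diag_nonneg_of_psd hP i

lemma trace_mul_nonneg_of_psd {P Q : Matrix (Fin n) (Fin n) ℂ}
    (hP : P.PosSemidef) (hQ : Q.PosSemidef) : 0 ≤ (P * Q).trace := by
  obtain ⟨R, hRpsd, hRR⟩ : ∃ R : Matrix (Fin n) (Fin n) ℂ, R.PosSemidef ∧ R * R = Q := by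
    open scoped MatrixOrder in
    exact ⟨CFC.sqrt Q, (CFC.sqrt_nonneg Q).posSemidef, CFC.sqrt_mul_sqrt_self Q hQ.nonneg⟩
  have hRh : Rᴴ = R := hRpsd.1
  have key : (R * P * Rᴴ).PosSemidef := hP.mul_mul_conjTranspose_same R
  rw [hRh] at key
  have : (P * Q).trace = (R * P * R).trace := by
    rw [← hRR, ← Matrix.mul_assoc, Matrix.trace_mul_comm (P * R) R, ← Matrix.mul_assoc]
  rw [this]
  exact trace_nonneg_of_psd key

lemma trace_mul_le_of_psd {P Q : Matrix (Fin n) (Fin n) ℂ} {c : ℝ}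
    (hP : P.PosSemidef) (hQc : ((c : ℂ) • 1 - Q).PosSemidef) :
    (Q * P).trace ≤ (c : ℂ) * P.trace := by
  have h0 : 0 ≤ (((c : ℂ) • 1 - Q) * P).trace := trace_mul_nonneg_of_psd hQc hP
  have : (((c : ℂ) • 1 - Q) * P).trace = (c : ℂ) * P.trace - (Q * P).trace := by
    rw [Matrix.sub_mul, Matrix.trace_sub, Matrix.smul_mul, Matrix.one_mul, Matrix.trace_smul,
      smul_eq_mul]
  rw [this] at h0
  exact sub_nonneg.1 h0

lemma psd_smul_of_nonneg {P : Matrix (Fin n) (Fin n) ℂ} (hP : P.PosSemidef) {c : ℝ}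
    (hc : 0 ≤ c) : ((c : ℂ) • P).PosSemidef := by
  constructor
  · rw [Matrix.IsHermitian, Matrix.conjTranspose_smul, hP.1]
    congr 1
    simp [Complex.ext_iff]
  · exact (hP.smul (show (0:ℂ) ≤ c by exact_mod_cast hc)).2

lemma exists_sqrt_of_psd {S : Matrix (Fin n) (Fin n) ℂ} (hS : S.PosSemidef) :
    ∃ R : Matrix (Fin n) (Fin n) ℂ, R.PosSemidef ∧ R * R = S :=
  open scoped MatrixOrder in
  ⟨CFC.sqrt S, (CFC.sqrt_nonneg S).posSemidef, CFC.sqrt_mul_sqrt_self S hS.nonneg⟩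

lemma inv_le_smul_one_of_psd {C : Matrix (Fin n) (Fin n) ℂ} {K : ℝ} (hK : 0 < K)
    (hC : C.PosDef) (hle : (C - ((K : ℂ))⁻¹ • 1).PosSemidef) :
    ((K : ℂ) • 1 - C⁻¹).PosSemidef := by
  have hS : C⁻¹.PosDef := hC.inv
  have hCu : IsUnit C.det := hC.det_pos.ne'.isUnit
  have hSu : IsUnit (C⁻¹).det := (Matrix.isUnit_iff_isUnit_det _).1
    ((Matrix.isUnit_nonsing_inv_iff).2 ((Matrix.isUnit_iff_isUnit_det _).2 hCu))
  obtain ⟨R, hR, hRR⟩ := exists_sqrt_of_psd hS.posSemidef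
  have hRh : Rᴴ = R := hR.1
  have hRu : IsUnit R.det := by
    have : IsUnit (R.det * R.det) := by
      rw [← Matrix.det_mul, hRR]; exact hSu
    exact isUnit_of_mul_isUnit_left this
  have hCS : C = (C⁻¹)⁻¹ := (Matrix.nonsing_inv_nonsing_inv C hCu).symm
  have hkey : (R * (C - ((K : ℂ))⁻¹ • 1) * Rᴴ).PosSemidef :=
    hle.mul_mul_conjTranspose_same R
  rw [hRh] at hkey
  have hRCR : R * C * R = 1 := by
    rw [hCS, ← hRR, Matrix.mul_inv_rev, ← Matrix.mul_assoc R R⁻¹ R⁻¹,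
      Matrix.mul_nonsing_inv _ hRu, Matrix.one_mul, Matrix.nonsing_inv_mul _ hRu]
  have hexp : R * (C - ((K : ℂ))⁻¹ • 1) * R = 1 - ((K : ℂ))⁻¹ • C⁻¹ := by
    rw [Matrix.mul_sub, Matrix.sub_mul, hRCR]
    congr 1
    rw [Matrix.mul_smul, Matrix.mul_one, Matrix.smul_mul, hRR]
  rw [hexp] at hkey
  have h2 := psd_smul_of_nonneg hkey hK.le
  have heq : (K : ℂ) • (1 - ((K : ℂ))⁻¹ • C⁻¹) = (K : ℂ) • 1 - C⁻¹ := by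
    rw [smul_sub, smul_smul, mul_inv_cancel₀ (by exact_mod_cast hK.ne'), one_smul]
  rwa [heq] at h2

lemma trace_sq_hermitian {B : Matrix (Fin n) (Fin n) ℂ} (hB : B.IsHermitian) :
    (B * B).trace = ((∑ i : Fin n, ∑ j : Fin n, ‖B i j‖ ^ 2 : ℝ) : ℂ) := by
  have hterm : ∀ j i : Fin n, B j i * B i j = ((‖B i j‖ ^ 2 : ℝ) : ℂ) := by
    intro j i
    rw [← hB.apply j i, mul_comm, Complex.sq_norm]
    simpa using Complex.mul_conj (B i j)
  rw [Matrix.trace]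
  simp only [Matrix.diag_apply, Matrix.mul_apply, hterm]
  rw [Finset.sum_comm]
  push_cast
  rfl

lemma key_bound {C B : Matrix (Fin n) (Fin n) ℂ} (hC : C.PosDef) (hB : B.IsHermitian)
    {K : ℝ} (hK : 0 < K) (hle : (C - ((K : ℂ))⁻¹ • 1).PosSemidef) :
    |(C⁻¹ * B * C⁻¹ * B).trace.re| ≤
      K ^ 2 * ∑ i : Fin n, ∑ j : Fin n, ‖B i j‖ ^ 2 := by
  set Sig : ℝ := ∑ i : Fin n, ∑ j : Fin n, ‖B i j‖ ^ 2 with hSig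
  have hS : C⁻¹.PosDef := hC.inv
  have hSp := hS.posSemidef
  have hKS : ((K : ℂ) • 1 - C⁻¹).PosSemidef := inv_le_smul_one_of_psd hK hC hle
  have hP1 : (B * C⁻¹ * B).PosSemidef := by
    have := hSp.conjTranspose_mul_mul_same B
    rwa [hB.eq] at this
  have hBB : (B * B).PosSemidef := by
    have := Matrix.posSemidef_conjTranspose_mul_self B
    rwa [hB.eq] at this
  have hassoc : C⁻¹ * B * C⁻¹ * B = C⁻¹ * (B * C⁻¹ * B) := by
    simp [Matrix.mul_assoc]
  have h0 : 0 ≤ (C⁻¹ * (B * C⁻¹ * B)).trace := trace_mul_nonneg_of_psd hSp hP1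
  have h1 : (C⁻¹ * (B * C⁻¹ * B)).trace ≤ (K : ℂ) * (B * C⁻¹ * B).trace :=
    trace_mul_le_of_psd hP1 hKS
  have h2 : (B * C⁻¹ * B).trace = (C⁻¹ * (B * B)).trace := by
    rw [Matrix.mul_assoc, Matrix.trace_mul_comm B (C⁻¹ * B), Matrix.mul_assoc]
  have h3 : (C⁻¹ * (B * B)).trace ≤ (K : ℂ) * (B * B).trace :=
    trace_mul_le_of_psd hBB hKS
  have h4 := trace_sq_hermitian hB
  -- extract real parts
  have hre0 : 0 ≤ (C⁻¹ * (B * C⁻¹ * B)).trace.re := (Complex.le_def.1 h0).1.trans_eq rfl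
  have hre1 : (C⁻¹ * (B * C⁻¹ * B)).trace.re ≤ K * (B * C⁻¹ * B).trace.re := by
    have := (Complex.le_def.1 h1).1
    rwa [Complex.re_ofReal_mul] at this
  have hre3 : (B * C⁻¹ * B).trace.re ≤ K * Sig := by
    have := (Complex.le_def.1 h3).1
    rw [Complex.re_ofReal_mul] at this
    rw [h2, ]
    calc (C⁻¹ * (B * B)).trace.re ≤ K * (B * B).trace.re := this
    _ = K * Sig := by rw [h4, Complex.ofReal_re]
  rw [hassoc, abs_of_nonneg hre0]
  calc (C⁻¹ * (B * C⁻¹ * B)).trace.re ≤ K * (B * C⁻¹ * B).trace.re := hre1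
    _ ≤ K * (K * Sig) := by nlinarith
    _ = K ^ 2 * Sig := by ring



lemma line_hasDerivAt (A B : Matrix (Fin n) (Fin n) ℂ) (t₀ : ℝ) :
    HasDerivAt (fun t : ℝ => A + (t : ℂ) • B) B t₀ := by
  have heq : (fun t : ℝ => A + (t : ℂ) • B) = fun t : ℝ => A + t • B := by
    funext t
    ext i j
    simp [Complex.real_smul]
  rw [heq]
  exact (((hasDerivAt_id t₀).smul_const B).const_add A).congr_deriv (one_smul _ _)

lemma det_line_hasDerivAt (A B : Matrix (Fin n) (Fin n) ℂ) (t₀ : ℝ)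
    (h : IsUnit (A + (t₀ : ℂ) • B)) :
    HasDerivAt (fun t : ℝ => (A + (t : ℂ) • B).det)
      ((A + (t₀ : ℂ) • B).det * (((A + (t₀ : ℂ) • B))⁻¹ * B).trace) t₀ := by
  set D := A + (t₀ : ℂ) • B with hD
  set M := D⁻¹ * B with hM
  set Q := (Matrix.det (1 + (X : ℂ[X]) • M.map Polynomial.C)).divX.divX with hQ
  haveI := h.invertible
  have hfun : ∀ t : ℝ, (A + (t : ℂ) • B).det
      = D.det * (1 + M.trace * ((t - t₀ : ℝ) : ℂ) +
          Q.eval ((t - t₀ : ℝ) : ℂ) * (((t - t₀ : ℝ) : ℂ) * ((t - t₀ : ℝ) : ℂ))) := by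
    intro t
    have h1 : A + (t : ℂ) • B = D * (1 + ((t - t₀ : ℝ) : ℂ) • M) := by
      rw [Matrix.mul_add, Matrix.mul_one, Matrix.mul_smul, hM,
        Matrix.mul_inv_cancel_left_of_invertible]
      push_cast
      rw [hD]
      module
    rw [h1, Matrix.det_mul, Matrix.det_one_add_smul, ← hQ, pow_two]
  have hc : HasDerivAt (fun t : ℝ => ((t - t₀ : ℝ) : ℂ)) 1 t₀ := by
    have h1 : HasDerivAt (fun t : ℝ => (t : ℂ)) 1 t₀ := by
      exact Complex.ofRealCLM.hasDerivAt
    have := h1.sub_const (t₀ : ℂ)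
    simpa [Complex.ofReal_sub] using this
  have hpoly : HasDerivAt (fun t : ℝ => Q.eval ((t - t₀ : ℝ) : ℂ))
      (Q.derivative.eval (((t₀ - t₀ : ℝ) : ℂ)) * 1) t₀ :=
    HasDerivAt.comp t₀ (Q.hasDerivAt _) hc
  have hg := (((hc.const_mul M.trace).const_add 1).add (hpoly.mul (hc.mul hc))).const_mul D.det
  simp only [Pi.add_apply, Pi.mul_apply] at hg
  rw [show (fun t : ℝ => D.det * ((1 : ℂ) + M.trace * ((t - t₀ : ℝ) : ℂ) +
      Q.eval ((t - t₀ : ℝ) : ℂ) * (((t - t₀ : ℝ) : ℂ) * ((t - t₀ : ℝ) : ℂ))))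
      = fun t : ℝ => (A + (t : ℂ) • B).det
    from funext fun t => (hfun t).symm] at hg
  simpa using hg

noncomputable def traceReCLM : Matrix (Fin n) (Fin n) ℂ →L[ℝ] ℝ :=
  LinearMap.toContinuousLinearMap
    (Complex.reLm.comp (Matrix.traceLinearMap (Fin n) ℝ ℂ))

@[simp] lemma traceReCLM_apply (X : Matrix (Fin n) (Fin n) ℂ) :
    traceReCLM X = X.trace.re := rfl

lemma inv_trace_re_hasDerivAt (A B : Matrix (Fin n) (Fin n) ℂ) (t₀ : ℝ)
    (h : IsUnit (A + (t₀ : ℂ) • B)) :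
    HasDerivAt (fun t : ℝ => (((A + (t : ℂ) • B))⁻¹ * B).trace.re)
      (-((((A + (t₀ : ℂ) • B))⁻¹ * B * ((A + (t₀ : ℂ) • B))⁻¹ * B).trace.re)) t₀ := by
  haveI : CompleteSpace (Matrix (Fin n) (Fin n) ℂ) := FiniteDimensional.complete ℝ _
  set D := A + (t₀ : ℂ) • B with hD
  set u : (Matrix (Fin n) (Fin n) ℂ)ˣ := h.unit with hu
  have hcu : (↑u : Matrix (Fin n) (Fin n) ℂ) = D := rfl
  have hcuinv : (↑u⁻¹ : Matrix (Fin n) (Fin n) ℂ) = D⁻¹ := by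
    rw [Matrix.coe_units_inv u, hcu]
  have hline := line_hasDerivAt A B t₀
  have hF : HasFDerivAt Ring.inverse
      (-ContinuousLinearMap.mulLeftRight ℝ _ (↑u⁻¹) (↑u⁻¹)) ((↑u : Matrix (Fin n) (Fin n) ℂ)) :=
    hasFDerivAt_ringInverse u
  rw [hcu] at hF
  have hinv : HasDerivAt (fun t : ℝ => Ring.inverse (A + (t : ℂ) • B))
      (-(D⁻¹ * B * D⁻¹)) t₀ := by
    have := hF.comp_hasDerivAt t₀ hline
    simp [hcuinv, ContinuousLinearMap.mulLeftRight_apply] at this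
    exact this
  have hmul := hinv.mul_const B
  have hT := (traceReCLM (n := n)).hasFDerivAt.comp_hasDerivAt t₀ hmul
  have hfun : (fun t : ℝ => traceReCLM (Ring.inverse (A + (t : ℂ) • B) * B))
      = fun t : ℝ => (((A + (t : ℂ) • B))⁻¹ * B).trace.re := by
    funext t
    rw [traceReCLM_apply, ← Matrix.nonsing_inv_eq_ringInverse]
  have hval : traceReCLM (-(D⁻¹ * B * D⁻¹) * B) = -((D⁻¹ * B * D⁻¹ * B).trace.re) := by
    rw [traceReCLM_apply, Matrix.neg_mul, Matrix.trace_neg, Complex.neg_re]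
  replace hT := hT.congr_deriv hval
  simp only [Function.comp_def] at hT
  rw [hfun] at hT
  exact hT

end Helpers

/-- **Quantitative second-order bound for `log det` (matrix form of Lemma 4.1).**
If `A`, `B` are `n × n` complex Hermitian matrices such that for all `t ∈ [0,1]` the matrix
`A + t B` is positive definite with all eigenvalues at least `1/K` (i.e.
`(A + tB) - K⁻¹ • 1` is positive semidefinite), then
`|log det (A+B) - log det A - tr(A⁻¹B)| ≤ (K²/2) Σ_{i,j} |B_{ij}|²`. -/
theorem logdet_second_order_bound (n : ℕ) (hn : 0 < n) (K : ℝ) (hK : 0 < K)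
    (A B : Matrix (Fin n) (Fin n) ℂ)
    (hA : A.IsHermitian) (hB : B.IsHermitian)
    (hpos : ∀ t : ℝ, t ∈ Set.Icc (0:ℝ) 1 → (A + (t : ℂ) • B).PosDef)
    (hev : ∀ t : ℝ, t ∈ Set.Icc (0:ℝ) 1 →
      (A + (t : ℂ) • B - ((K : ℂ))⁻¹ • (1 : Matrix (Fin n) (Fin n) ℂ)).PosSemidef) :
    |Real.log ((A + B).det.re) - Real.log (A.det.re) -
        (Matrix.trace (A⁻¹ * B)).re| ≤
      K ^ 2 / 2 * ∑ i : Fin n, ∑ j : Fin n, ‖B i j‖ ^ 2 := by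
  set Sig : ℝ := ∑ i : Fin n, ∑ j : Fin n, ‖B i j‖ ^ 2 with hSig
  set f : ℝ → ℝ := fun t => Real.log ((A + (t : ℂ) • B).det.re) with hf
  set g : ℝ → ℝ := fun t => (((A + (t : ℂ) • B))⁻¹ * B).trace.re with hg
  set h : ℝ → ℝ := fun t =>
    -((((A + (t : ℂ) • B))⁻¹ * B * ((A + (t : ℂ) • B))⁻¹ * B).trace.re) with hh
  have hfd : ∀ t ∈ Set.Icc (0:ℝ) 1, HasDerivAt f (g t) t := by
    intro t ht
    have hCt := hpos t ht
    have hdetC : (0 : ℂ) < (A + (t : ℂ) • B).det := hCt.det_pos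
    have hre_pos : 0 < (A + (t : ℂ) • B).det.re := (Complex.lt_def.1 hdetC).1
    have him : (A + (t : ℂ) • B).det.im = 0 := ((Complex.lt_def.1 hdetC).2).symm
    have hdet := det_line_hasDerivAt A B t hCt.isUnit
    have hre : HasDerivAt (fun s : ℝ => (A + (s : ℂ) • B).det.re)
        (((A + (t : ℂ) • B).det * (((A + (t : ℂ) • B))⁻¹ * B).trace).re) t :=
      Complex.reCLM.hasFDerivAt.comp_hasDerivAt t hdet
    have hlog := hre.log hre_pos.ne'
    have hval : ((A + (t : ℂ) • B).det * (((A + (t : ℂ) • B))⁻¹ * B).trace).re /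
        (A + (t : ℂ) • B).det.re = g t := by
      have hdeq : (A + (t : ℂ) • B).det = (((A + (t : ℂ) • B).det.re : ℝ) : ℂ) := by
        apply Complex.ext
        · simp
        · simpa using him
      rw [hdeq, Complex.re_ofReal_mul, Complex.ofReal_re]
      exact mul_div_cancel_left₀ _ hre_pos.ne'
    rw [hval] at hlog
    exact hlog
  have hgd : ∀ t ∈ Set.Icc (0:ℝ) 1, HasDerivAt g (h t) t := by
    intro t ht
    exact inv_trace_re_hasDerivAt A B t (hpos t ht).isUnit
  have hhb : ∀ t ∈ Set.Icc (0:ℝ) 1, |h t| ≤ K ^ 2 * Sig := by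
    intro t ht
    rw [hh]
    rw [abs_neg]
    exact key_bound (hpos t ht) hB hK (hev t ht)
  have hmain := taylor_aux hfd hgd hhb
  have h1 : f 1 = Real.log ((A + B).det.re) := by simp [hf]
  have h0 : f 0 = Real.log (A.det.re) := by simp [hf]
  have hg0 : g 0 = (Matrix.trace (A⁻¹ * B)).re := by simp [hg]
  rw [h1, h0, hg0] at hmain
  calc |Real.log ((A + B).det.re) - Real.log (A.det.re) - (Matrix.trace (A⁻¹ * B)).re|
      ≤ K ^ 2 * Sig / 2 := hmain
    _ = K ^ 2 / 2 * Sig := by ring
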